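/- For all ρ > 0, c ∈ [−1, 1] and w ∈ ℝ, the limit as R → +∞ of the expression −(R + ρc)·sin(w/R)/(ρ² + 2R(1 − cos(w/R))(R + ρc))^{3/2} − (R − ρc)·sin(w/R)/(ρ² + 2R(1 − cos(w/R))(R − ρc))^{3/2} equals −2w/(ρ² + w²)^{3/2}. -/

import Mathlib

open Filter Real

private lemma limA (w : ℝ) :
    Tendsto (fun R : ℝ => R * Real.sin (w / R)) atTop (nhds w) := by
  rcases eq_or_ne w 0 with h | h
  · simpa [h] using (tendsto_const_nhds : Tendsto (fun _ : ℝ => (0:ℝ)) atTop _)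
  · have hslope : Tendsto (fun t : ℝ => Real.sin t / t) (nhdsWithin 0 {(0:ℝ)}ᶜ) (nhds 1) := by
      have h1 := Real.hasDerivAt_sin 0
      rw [hasDerivAt_iff_tendsto_slope] at h1
      have heq : slope Real.sin 0 = fun t => Real.sin t / t := by
        funext t; simp [slope_def_field]
      rw [heq, Real.cos_zero] at h1
      exact h1
    have hwR : Tendsto (fun R : ℝ => w / R) atTop (nhdsWithin 0 {(0:ℝ)}ᶜ) := by
      apply tendsto_nhdsWithin_of_tendsto_nhds_of_eventually_within
      · exact tendsto_const_nhds.div_atTop tendsto_id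
      · filter_upwards [eventually_gt_atTop (0:ℝ)] with R hR
        exact div_ne_zero h (ne_of_gt hR)
    have h2 := (hslope.comp hwR).const_mul w
    have h3 : Tendsto (fun R : ℝ => R * Real.sin (w / R)) atTop (nhds (w * 1)) := by
      refine h2.congr' ?_
      filter_upwards [eventually_gt_atTop (0:ℝ)] with R hR
      have hR0 : R ≠ 0 := ne_of_gt hR
      simp only [Function.comp_apply]
      rw [div_div_eq_mul_div, mul_div_assoc', mul_comm w, mul_div_assoc, div_self h]
      ring
    simpa using h3

private lemma limSin (w : ℝ) :
    Tendsto (fun R : ℝ => Real.sin (w / R)) atTop (nhds 0) := by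
  have h0 : Tendsto (fun R : ℝ => w / R) atTop (nhds 0) :=
    tendsto_const_nhds.div_atTop tendsto_id
  have := (Real.continuous_sin.continuousAt (x := (0:ℝ))).tendsto.comp h0
  simpa [Function.comp_def] using this

private lemma limCos (w : ℝ) :
    Tendsto (fun R : ℝ => Real.cos (w / R)) atTop (nhds 1) := by
  have h0 : Tendsto (fun R : ℝ => w / R) atTop (nhds 0) :=
    tendsto_const_nhds.div_atTop tendsto_id
  have := (Real.continuous_cos.continuousAt (x := (0:ℝ))).tendsto.comp h0
  simpa [Function.comp_def] using this

private lemma limB (w : ℝ) :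
    Tendsto (fun R : ℝ => 2 * R ^ 2 * (1 - Real.cos (w / R))) atTop (nhds (w ^ 2)) := by
  have hcos := limCos w
  have hpos : ∀ᶠ R : ℝ in atTop, 0 < 1 + Real.cos (w / R) := by
    have := hcos.eventually (eventually_gt_nhds (by norm_num : (0:ℝ) < 1))
    filter_upwards [this] with R hR; linarith
  have hA := limA w
  have h2 : Tendsto (fun R : ℝ => 2 * (R * Real.sin (w / R)) ^ 2 / (1 + Real.cos (w / R)))
      atTop (nhds (2 * w ^ 2 / (1 + 1))) := by
    exact (((hA.pow 2).const_mul 2).div (tendsto_const_nhds.add hcos) (by norm_num))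
  have h3 : Tendsto (fun R : ℝ => 2 * (R * Real.sin (w / R)) ^ 2 / (1 + Real.cos (w / R)))
      atTop (nhds (w ^ 2)) := by
    convert h2 using 2; ring
  refine h3.congr' ?_
  filter_upwards [hpos] with R hR
  have hs : Real.sin (w / R) ^ 2 = (1 - Real.cos (w / R)) * (1 + Real.cos (w / R)) := by
    have := Real.sin_sq_add_cos_sq (w / R); nlinarith
  field_simp
  nlinarith [hs]

private lemma limTerm (ρ d w : ℝ) (hρ : 0 < ρ) :
    Tendsto (fun R : ℝ => (R + d) * Real.sin (w / R) /
      (ρ ^ 2 + 2 * R * (1 - Real.cos (w / R)) * (R + d)) ^ ((3 : ℝ) / 2)) atTop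
      (nhds (w / (ρ ^ 2 + w ^ 2) ^ ((3 : ℝ) / 2))) := by
  have hX : (0:ℝ) < ρ ^ 2 + w ^ 2 := by positivity
  -- numerator
  have hnum : Tendsto (fun R : ℝ => (R + d) * Real.sin (w / R)) atTop (nhds w) := by
    have := (limA w).add ((limSin w).const_mul d)
    have h' : Tendsto (fun R : ℝ => R * Real.sin (w / R) + d * Real.sin (w / R)) atTop
        (nhds (w + d * 0)) := this
    simpa [add_mul] using h'.congr (fun R => by ring)
  -- 2R(1-cos(w/R)) → 0
  have hsmall : Tendsto (fun R : ℝ => 2 * R * (1 - Real.cos (w / R))) atTop (nhds 0) := by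
    have hinv : Tendsto (fun R : ℝ => R⁻¹) atTop (nhds 0) := tendsto_inv_atTop_zero
    have := (limB w).mul hinv
    have h' : Tendsto (fun R : ℝ => 2 * R ^ 2 * (1 - Real.cos (w / R)) * R⁻¹) atTop
        (nhds (w ^ 2 * 0)) := this
    rw [mul_zero] at h'
    refine h'.congr' ?_
    filter_upwards [eventually_gt_atTop (0:ℝ)] with R hR
    field_simp
  -- denominator base
  have hden : Tendsto (fun R : ℝ => ρ ^ 2 + 2 * R * (1 - Real.cos (w / R)) * (R + d)) atTop
      (nhds (ρ ^ 2 + w ^ 2)) := by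
    have h1 := (limB w).add (hsmall.const_mul d)
    have h1' : Tendsto (fun R : ℝ => 2 * R ^ 2 * (1 - Real.cos (w / R)) +
        d * (2 * R * (1 - Real.cos (w / R)))) atTop (nhds (w ^ 2 + d * 0)) := h1
    have h2 := tendsto_const_nhds.add h1' (f := fun _ : ℝ => ρ ^ 2)
    simpa [mul_zero, add_zero] using h2.congr (fun R => by ring)
  have hrpow : Tendsto (fun R : ℝ =>
      (ρ ^ 2 + 2 * R * (1 - Real.cos (w / R)) * (R + d)) ^ ((3 : ℝ) / 2)) atTop
      (nhds ((ρ ^ 2 + w ^ 2) ^ ((3 : ℝ) / 2))) := by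
    have hcont : ContinuousAt (fun x : ℝ => x ^ ((3 : ℝ) / 2)) (ρ ^ 2 + w ^ 2) :=
      Real.continuousAt_rpow_const _ _ (Or.inl hX.ne')
    exact hcont.tendsto.comp hden
  exact hnum.div hrpow (by positivity)

/-- the limit `R → ∞` of the tangential force of the curved Sitnikov
problem, expressed in the arc length `w = Rq`, is the classical Sitnikov force
`-2w/(ρ² + w²)^{3/2}` (here `ρ = r_ε(t;r) > 0` and `c = cos t ∈ [-1,1]`). -/
theorem curved_sitnikov_limit_R_infty (ρ c w : ℝ) (hρ : 0 < ρ)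
    (hc : c ∈ Set.Icc (-1 : ℝ) 1) :
    Filter.Tendsto (fun R : ℝ =>
      -((R + ρ * c) * Real.sin (w / R) /
          (ρ ^ 2 + 2 * R * (1 - Real.cos (w / R)) * (R + ρ * c)) ^ ((3 : ℝ) / 2)) -
        (R - ρ * c) * Real.sin (w / R) /
          (ρ ^ 2 + 2 * R * (1 - Real.cos (w / R)) * (R - ρ * c)) ^ ((3 : ℝ) / 2))
      Filter.atTop
      (nhds (-2 * w / (ρ ^ 2 + w ^ 2) ^ ((3 : ℝ) / 2))) := by
  have h1 := limTerm ρ (ρ * c) w hρ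
  have h2 := limTerm ρ (-(ρ * c)) w hρ
  have h2' : Tendsto (fun R : ℝ => (R - ρ * c) * Real.sin (w / R) /
      (ρ ^ 2 + 2 * R * (1 - Real.cos (w / R)) * (R - ρ * c)) ^ ((3 : ℝ) / 2)) atTop
      (nhds (w / (ρ ^ 2 + w ^ 2) ^ ((3 : ℝ) / 2))) := by
    refine h2.congr (fun R => ?_)
    simp only [← sub_eq_add_neg]
  have hcomb := h1.neg.sub h2'
  have heq : -2 * w / (ρ ^ 2 + w ^ 2) ^ ((3 : ℝ) / 2) =
      -(w / (ρ ^ 2 + w ^ 2) ^ ((3 : ℝ) / 2)) - w / (ρ ^ 2 + w ^ 2) ^ ((3 : ℝ) / 2) := by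
    ring
  rw [heq]
  exact hcomb
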